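/- There exists a real constant C such that for every positive integer n, B(√2, n) ≥ n^{1/2} − C; that is, B(√2, n) ≥ n^{1/2} + O(1). -/

import Mathlib

/-- `binaryOnes x n` is `B(x, n)`: the number of `1`'s among the first `n` binary digits of `x`
after the binary point, i.e. the number of `i` with `1 ≤ i ≤ n` and `⌊2^i·x⌋ mod 2 = 1`. -/
noncomputable def binaryOnes (x : ℝ) (n : ℕ) : ℕ :=
  ((Finset.Icc 1 n).filter fun i => ⌊(2 : ℝ) ^ i * x⌋ % 2 = 1).card


/-- binary digit sum -/
def dsum (n : ℕ) : ℕ := (Nat.digits 2 n).sum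

lemma dsum_zero : dsum 0 = 0 := by simp [dsum]

lemma dsum_bit (k e : ℕ) (he : e < 2) : dsum (2 * k + e) = dsum k + e := by
  rcases Nat.eq_zero_or_pos (2 * k + e) with h0 | hpos
  · have hk : k = 0 ∧ e = 0 := by omega
    simp [hk.1, hk.2, dsum]
  · unfold dsum
    rw [Nat.digits_def' (by norm_num) hpos]
    have h1 : (2 * k + e) % 2 = e := by omega
    have h2 : (2 * k + e) / 2 = k := by omega
    rw [h1, h2, List.sum_cons]
    ring

lemma dsum_one : dsum 1 = 1 := by norm_num [dsum]

lemma dsum_add_le_aux : ∀ N a b : ℕ, a + b ≤ N → dsum (a + b) ≤ dsum a + dsum b := by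
  intro N
  induction N with
  | zero =>
    intro a b h
    have : a = 0 ∧ b = 0 := by omega
    simp [this.1, this.2, dsum_zero]
  | succ N ih =>
    intro a b h
    rcases Nat.eq_zero_or_pos (a + b) with h0 | hpos
    · have : a = 0 ∧ b = 0 := by omega
      simp [this.1, this.2, dsum_zero]
    have ha : a = 2 * (a / 2) + a % 2 := by omega
    have hb : b = 2 * (b / 2) + b % 2 := by omega
    have hsa : dsum a = dsum (a / 2) + a % 2 := by
      conv_lhs => rw [ha]
      exact dsum_bit _ _ (by omega)
    have hsb : dsum b = dsum (b / 2) + b % 2 := by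
      conv_lhs => rw [hb]
      exact dsum_bit _ _ (by omega)
    rcases Nat.lt_or_ge (a % 2 + b % 2) 2 with hlt | hge
    · have hab : a + b = 2 * (a / 2 + b / 2) + (a % 2 + b % 2) := by omega
      rw [hab, dsum_bit _ _ hlt, hsa, hsb]
      have := ih (a / 2) (b / 2) (by omega)
      omega
    · have he : a % 2 = 1 ∧ b % 2 = 1 := by omega
      have hab : a + b = 2 * (a / 2 + b / 2 + 1) + 0 := by omega
      rw [hab, dsum_bit _ _ (by omega)]
      have h1 : dsum (a / 2 + b / 2 + 1) ≤ dsum (a / 2 + b / 2) + dsum 1 :=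
        ih _ _ (by omega)
      have h2 : dsum (a / 2 + b / 2) ≤ dsum (a / 2) + dsum (b / 2) := ih _ _ (by omega)
      rw [dsum_one] at h1
      omega

lemma dsum_add_le (a b : ℕ) : dsum (a + b) ≤ dsum a + dsum b :=
  dsum_add_le_aux (a + b) a b le_rfl

lemma dsum_two_mul (k : ℕ) : dsum (2 * k) = dsum k := by
  have := dsum_bit k 0 (by norm_num); simpa using this

lemma dsum_mul_le_aux : ∀ N a b : ℕ, b ≤ N → dsum (a * b) ≤ dsum a * dsum b := by
  intro N
  induction N with
  | zero =>
    intro a b h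
    have : b = 0 := by omega
    simp [this, dsum_zero]
  | succ N ih =>
    intro a b h
    rcases Nat.eq_zero_or_pos b with h0 | hpos
    · simp [h0, dsum_zero]
    have hb : b = 2 * (b / 2) + b % 2 := by omega
    have hsb : dsum b = dsum (b / 2) + b % 2 := by
      conv_lhs => rw [hb]
      exact dsum_bit _ _ (by omega)
    have hab : a * b = 2 * (a * (b / 2)) + a * (b % 2) := by
      conv_lhs => rw [hb]
      ring
    calc dsum (a * b) = dsum (2 * (a * (b / 2)) + a * (b % 2)) := by rw [← hab]
      _ ≤ dsum (2 * (a * (b / 2))) + dsum (a * (b % 2)) := dsum_add_le _ _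
      _ = dsum (a * (b / 2)) + dsum (a * (b % 2)) := by rw [dsum_two_mul]
      _ ≤ dsum a * dsum (b / 2) + dsum a * (b % 2) := by
          have h1 := ih a (b / 2) (by omega)
          have h2 : dsum (a * (b % 2)) ≤ dsum a * (b % 2) := by
            rcases Nat.mod_two_eq_zero_or_one b with h | h
            · simp [h, dsum_zero]
            · simp [h]
          omega
      _ = dsum a * dsum b := by rw [hsb]; ring

lemma dsum_mul_le (a b : ℕ) : dsum (a * b) ≤ dsum a * dsum b :=
  dsum_mul_le_aux b a b le_rfl

lemma dsum_shift : ∀ (j q r : ℕ), r < 2 ^ j → dsum (2 ^ j * q + r) = dsum q + dsum r := by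
  intro j
  induction j with
  | zero =>
    intro q r hr
    have : r = 0 := by omega
    simp [this, dsum_zero]
  | succ j ih =>
    intro q r hr
    have hp : (0:ℕ) < 2 ^ j := Nat.pow_pos (by norm_num)
    have hkey : 2 ^ (j + 1) * q + r = 2 * (2 ^ j * q + r / 2) + r % 2 := by
      have h2 : 2 ^ (j+1) * q = 2 * (2 ^ j * q) := by ring
      have h3 : 2 ^ (j+1) = 2 * 2 ^ j := by ring
      omega
    rw [hkey, dsum_bit _ _ (by omega), ih q (r / 2) (by
      have : 2 ^ (j+1) = 2 * 2 ^ j := by ring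
      omega)]
    have hr2 : dsum r = dsum (r / 2) + r % 2 := by
      conv_lhs => rw [show r = 2 * (r / 2) + r % 2 by omega]
      exact dsum_bit _ _ (by omega)
    omega

lemma dsum_pow_sub_one : ∀ t : ℕ, dsum (2 ^ t - 1) = t := by
  intro t
  induction t with
  | zero => simp [dsum_zero]
  | succ t ih =>
    have hp : (0:ℕ) < 2 ^ t := Nat.pow_pos (by norm_num)
    have : 2 ^ (t + 1) - 1 = 2 * (2 ^ t - 1) + 1 := by
      have : 2 ^ (t+1) = 2 * 2 ^ t := by ring
      omega
    rw [this, dsum_bit _ _ (by norm_num), ih]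

noncomputable def A (i : ℕ) : ℕ := (⌊(2 : ℝ) ^ i * Real.sqrt 2⌋).toNat

lemma sqrt2_pos : (0:ℝ) < Real.sqrt 2 := Real.sqrt_pos.mpr (by norm_num)

lemma sqrt2_lt_two : Real.sqrt 2 < 2 := by
  nlinarith [Real.sq_sqrt (by norm_num : (0:ℝ) ≤ 2), Real.sqrt_nonneg 2]

lemma one_le_sqrt2 : (1:ℝ) ≤ Real.sqrt 2 := by
  nlinarith [Real.sq_sqrt (by norm_num : (0:ℝ) ≤ 2), Real.sqrt_nonneg 2]

lemma floor_nonneg (i : ℕ) : 0 ≤ ⌊(2 : ℝ) ^ i * Real.sqrt 2⌋ := by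
  apply Int.floor_nonneg.mpr
  positivity

lemma A_intcast (i : ℕ) : (A i : ℤ) = ⌊(2 : ℝ) ^ i * Real.sqrt 2⌋ := by
  rw [A]; exact Int.toNat_of_nonneg (floor_nonneg i)

lemma A_realcast (i : ℕ) : (A i : ℝ) = (⌊(2 : ℝ) ^ i * Real.sqrt 2⌋ : ℝ) := by
  exact_mod_cast congrArg (Int.cast : ℤ → ℝ) (A_intcast i)

lemma A_le (i : ℕ) : (A i : ℝ) ≤ 2 ^ i * Real.sqrt 2 := by
  rw [A_realcast]
  exact Int.floor_le _

lemma lt_A_add_one (i : ℕ) : (2:ℝ) ^ i * Real.sqrt 2 < A i + 1 := by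
  have := Int.lt_floor_add_one ((2:ℝ) ^ i * Real.sqrt 2)
  rw [A_realcast]
  linarith

lemma A_strict (i : ℕ) : (A i : ℝ) < 2 ^ i * Real.sqrt 2 := by
  rcases lt_or_eq_of_le (A_le i) with h | h
  · exact h
  · exfalso
    have : Real.sqrt 2 = (A i : ℝ) / 2 ^ i := by
      field_simp at h ⊢
      linarith
    have hirr := irrational_sqrt_two
    rw [this] at hirr
    exact hirr ⟨(A i : ℚ) / (2:ℚ) ^ i, by push_cast; ring⟩

lemma A_rec (i : ℕ) : A (i + 1) / 2 = A i ∧ A (i+1) % 2 ≤ 1 := by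
  have h1 : (2 * (A i) : ℝ) ≤ 2 ^ (i+1) * Real.sqrt 2 := by
    have := A_le i
    rw [pow_succ]
    nlinarith
  have h2 : (2:ℝ) ^ (i+1) * Real.sqrt 2 < 2 * (A i) + 2 := by
    have := lt_A_add_one i
    rw [pow_succ]
    nlinarith
  have hl : 2 * A i ≤ A (i+1) := by
    have := lt_A_add_one (i+1)
    have h1' : (2 * (A i) : ℝ) < A (i+1) + 1 := lt_of_le_of_lt h1 this
    exact_mod_cast Nat.lt_add_one_iff.mp (by exact_mod_cast h1')
  have hu : A (i+1) < 2 * A i + 2 := by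
    have := A_le (i+1)
    have : (A (i+1) : ℝ) < 2 * (A i) + 2 := lt_of_le_of_lt this h2
    exact_mod_cast this
  omega

lemma A_zero : A 0 = 1 := by
  have h1 : (1:ℝ) ≤ 2 ^ 0 * Real.sqrt 2 := by simpa using one_le_sqrt2
  have h2 : (2:ℝ) ^ 0 * Real.sqrt 2 < 2 := by simpa using sqrt2_lt_two
  have := A_le 0
  have := lt_A_add_one 0
  have hle : (1:ℝ) ≤ ((A 0 : ℕ) : ℝ) + 1 - 1 + 1 := by linarith
  have hA1 : (A 0 : ℝ) < 2 := by linarith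
  have hA2 : (0:ℝ) < (A 0 : ℝ) + 1 - 1 + 1 := by linarith
  have l : A 0 < 2 := by exact_mod_cast hA1
  have g : (1:ℝ) ≤ A 0 + 1 := by linarith
  have g2 : (1:ℕ) ≤ A 0 + 1 := by exact_mod_cast g
  -- need A 0 ≥ 1: from 1 ≤ 2^0 * sqrt2 < A 0 + 1, so A 0 + 1 > 1
  have g3 : (1:ℝ) < (A 0:ℝ) + 1 := by linarith
  have g4 : (1:ℕ) < A 0 + 1 := by exact_mod_cast g3
  omega

lemma binaryOnes_succ (x : ℝ) (n : ℕ) :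
    binaryOnes x (n + 1) =
      binaryOnes x n + (if ⌊(2 : ℝ) ^ (n+1) * x⌋ % 2 = 1 then 1 else 0) := by
  unfold binaryOnes
  rw [← Finset.insert_Icc_right_eq_Icc_add_one (by omega : 1 ≤ n + 1), Finset.filter_insert]
  split
  · rw [Finset.card_insert_of_notMem (by simp)]
  · simp

lemma dsum_A (n : ℕ) : dsum (A n) = binaryOnes (Real.sqrt 2) n + 1 := by
  induction n with
  | zero =>
    rw [A_zero, dsum_one]
    simp [binaryOnes]
  | succ n ih =>
    obtain ⟨hdiv, hmod⟩ := A_rec n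
    have hA : A (n+1) = 2 * A n + A (n+1) % 2 := by omega
    rw [hA, dsum_bit _ _ (by omega), ih, binaryOnes_succ]
    have hcast : ⌊(2 : ℝ) ^ (n+1) * Real.sqrt 2⌋ % 2 = 1 ↔ A (n+1) % 2 = 1 := by
      rw [← A_intcast (n+1)]
      omega
    split
    · rename_i h
      rw [hcast.mp h]
    · rename_i h
      have h0 : A (n+1) % 2 = 0 := by
        rcases Nat.mod_two_eq_zero_or_one (A (n+1)) with h' | h'
        · exact h'
        · exact absurd (hcast.mpr h') h
      rw [h0]

lemma A_lt_pow (n : ℕ) : A n < 2 ^ (n + 1) := by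
  have h1 := A_le n
  have h2 : (2:ℝ) ^ n * Real.sqrt 2 < 2 ^ (n+1) := by
    have : ((2:ℝ) ^ (n+1)) = 2 ^ n * 2 := by ring
    rw [this]
    have hp : (0:ℝ) < 2 ^ n := by positivity
    nlinarith [sqrt2_lt_two]
  have : (A n : ℝ) < ((2 ^ (n+1) : ℕ) : ℝ) := by push_cast; linarith
  exact_mod_cast this

lemma sq_upper (n : ℕ) : A n ^ 2 < 2 ^ (2 * n + 1) := by
  have h := A_strict n
  have hs : Real.sqrt 2 ^ 2 = 2 := Real.sq_sqrt (by norm_num)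
  have hA : (0:ℝ) ≤ (A n : ℝ) := by positivity
  have hp : (2:ℝ) ^ (2*n+1) = 2 ^ n * 2 ^ n * 2 := by
    rw [show 2*n+1 = n+n+1 by ring, pow_add, pow_add, pow_one]
    try ring
  have hr : ((A n : ℕ) : ℝ) ^ 2 < ((2 ^ (2*n+1) : ℕ) : ℝ) := by
    push_cast
    rw [hp]
    nlinarith
  exact_mod_cast hr

lemma sq_lower (n : ℕ) : 2 ^ (2 * n + 1) < (A n + 1) ^ 2 := by
  have h := lt_A_add_one n
  have hs : Real.sqrt 2 ^ 2 = 2 := Real.sq_sqrt (by norm_num)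
  have hA : (0:ℝ) ≤ (A n : ℝ) := by positivity
  have hs0 : (0:ℝ) ≤ Real.sqrt 2 := Real.sqrt_nonneg 2
  have hp0 : (0:ℝ) ≤ (2:ℝ) ^ n * Real.sqrt 2 := by positivity
  have hp : (2:ℝ) ^ (2*n+1) = 2 ^ n * 2 ^ n * 2 := by
    rw [show 2*n+1 = n+n+1 by ring, pow_add, pow_add, pow_one]
    try ring
  have hr : ((2 ^ (2*n+1) : ℕ) : ℝ) < ((A n + 1 : ℕ) : ℝ) ^ 2 := by
    push_cast
    rw [hp]
    nlinarith
  exact_mod_cast hr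

lemma key_bound (n : ℕ) (hn : 1 ≤ n) : n - 1 ≤ dsum (A n * A n) := by
  set K := A n * A n with hK
  have hK2 : K = A n ^ 2 := by rw [hK]; ring
  have hU : K < 2 ^ (2 * n + 1) := by rw [hK2]; exact sq_upper n
  have hL : 2 ^ (2 * n + 1) < K + 2 ^ (n + 2) := by
    have h1 := sq_lower n
    have h2 := A_lt_pow n
    have h3 : (A n + 1) ^ 2 = A n ^ 2 + 2 * A n + 1 := by ring
    have h4 : 2 ^ (n + 2) = 2 * 2 ^ (n + 1) := by ring
    rw [hK2]
    omega
  have hEpow : 2 ^ (n + 2) * 2 ^ (n - 1) = 2 ^ (2 * n + 1) := by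
    rw [← pow_add]
    congr 1
    omega
  have hone : (1:ℕ) ≤ 2 ^ (n - 1) := Nat.one_le_two_pow
  have hE : 2 ^ (n + 2) * (2 ^ (n - 1) - 1) = 2 ^ (2 * n + 1) - 2 ^ (n + 2) := by
    rw [Nat.mul_sub, hEpow, mul_one]
  set E := 2 ^ (n + 2) * (2 ^ (n - 1) - 1) with hEdef
  have hEle : E ≤ K := by omega
  have hrlt : K - E < 2 ^ (n + 2) := by omega
  have hsplit : K = 2 ^ (n + 2) * (2 ^ (n - 1) - 1) + (K - E) := by omega
  calc n - 1 = dsum (2 ^ (n-1) - 1) := (dsum_pow_sub_one (n-1)).symm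
    _ ≤ dsum (2 ^ (n-1) - 1) + dsum (K - E) := Nat.le_add_right _ _
    _ = dsum K := by
        rw [← dsum_shift (n+2) (2 ^ (n-1) - 1) (K - E) hrlt, ← hsplit]

/-- There is a real constant `C` such that `B(√2, n) ≥ n^{1/2} − C` for every positive
integer `n`; that is, `B(√2, n) ≥ n^{1/2} + O(1)`. -/
theorem stmt_14 : ∃ C : ℝ, ∀ n : ℕ, 0 < n →
    Real.sqrt n - C ≤ (binaryOnes (Real.sqrt 2) n : ℝ) := by
  refine ⟨2, fun n hn => ?_⟩
  set B := binaryOnes (Real.sqrt 2) n with hB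
  have h1 : dsum (A n) = B + 1 := dsum_A n
  have h2 : n - 1 ≤ dsum (A n * A n) := key_bound n hn
  have h3 : dsum (A n * A n) ≤ (B + 1) * (B + 1) := by
    calc dsum (A n * A n) ≤ dsum (A n) * dsum (A n) := dsum_mul_le _ _
      _ = (B + 1) * (B + 1) := by rw [h1]
  have h4 : n ≤ (B + 2) ^ 2 := by
    have hexp : (B + 2) ^ 2 = (B + 1) * (B + 1) + 2 * B + 3 := by ring
    omega
  have h5 : Real.sqrt n ≤ (B : ℝ) + 2 := by
    have hcast : (n : ℝ) ≤ ((B : ℝ) + 2) ^ 2 := by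
      have h := h4
      have : ((n : ℕ) : ℝ) ≤ (((B + 2) ^ 2 : ℕ) : ℝ) := by exact_mod_cast h
      push_cast at this
      linarith
    calc Real.sqrt n ≤ Real.sqrt (((B : ℝ) + 2) ^ 2) := Real.sqrt_le_sqrt hcast
      _ = (B : ℝ) + 2 := Real.sqrt_sq (by positivity)
  linarith
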